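/- For all stochastic matrices p and q on a nonempty finite set S, Doeblin's ergodicity coefficient satisfies α(p·q) ≥ max{α(p), α(q)}; in particular, for any sequence of stochastic matrices, the Doeblin coefficient of partial products is nondecreasing as more factors are multiplied on either side. -/
import Mathlib


/-- A stochastic matrix on a finite set `S`: nonnegative entries, each row sums to 1. -/
def IsStochastic {S : Type*} [Fintype S] (p : Matrix S S ℝ) : Prop :=
  (∀ i j, 0 ≤ p i j) ∧ ∀ i, ∑ j, p i j = 1

/-- A matrix all of whose rows are identical. -/
def IsConstRow {S : Type*} (E : Matrix S S ℝ) : Prop :=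
  ∀ i i' j, E i j = E i' j

/-- Doeblin's ergodicity coefficient `α(p) = Σ_j min_i p(i,j)`. -/
noncomputable def doeblin {S : Type*} [Fintype S] [Nonempty S] (p : Matrix S S ℝ) : ℝ :=
  ∑ j, Finset.univ.inf' Finset.univ_nonempty fun i => p i j

theorem doeblin_mul_ge_max {S : Type*} [Fintype S] [Nonempty S]
    (p q : Matrix S S ℝ) (hp : IsStochastic p) (hq : IsStochastic q) :
    max (doeblin p) (doeblin q) ≤ doeblin (p * q) := by
  have hmin_q : ∀ k j, Finset.univ.inf' Finset.univ_nonempty (fun i => q i j) ≤ q k j :=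
    fun k j => Finset.inf'_le _ (Finset.mem_univ k)
  have hmin_p : ∀ k j, Finset.univ.inf' Finset.univ_nonempty (fun i => p i j) ≤ p k j :=
    fun k j => Finset.inf'_le _ (Finset.mem_univ k)
  have hmin_q_nonneg : ∀ j, 0 ≤ Finset.univ.inf' Finset.univ_nonempty (fun i => q i j) :=
    fun j => Finset.le_inf' _ _ fun i _ => hq.1 i j
  have hmin_p_nonneg : ∀ j, 0 ≤ Finset.univ.inf' Finset.univ_nonempty (fun i => p i j) :=
    fun j => Finset.le_inf' _ _ fun i _ => hp.1 i j
  refine max_le ?_ ?_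
  · -- α(p) ≤ α(pq)
    calc doeblin p
        = ∑ k, Finset.univ.inf' Finset.univ_nonempty (fun i => p i k) := rfl
      _ = ∑ k, (Finset.univ.inf' Finset.univ_nonempty (fun i => p i k)) * ∑ j, q k j := by
          simp [hq.2]
      _ = ∑ j, ∑ k, (Finset.univ.inf' Finset.univ_nonempty (fun i => p i k)) * q k j := by
          simp_rw [Finset.mul_sum]; rw [Finset.sum_comm]
      _ ≤ ∑ j, Finset.univ.inf' Finset.univ_nonempty (fun i => (p * q) i j) := by
          refine Finset.sum_le_sum fun j _ => Finset.le_inf' _ _ fun i _ => ?_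
          show _ ≤ ∑ k, p i k * q k j
          exact Finset.sum_le_sum fun k _ =>
            mul_le_mul_of_nonneg_right (hmin_p i k) (hq.1 k j)
  · -- α(q) ≤ α(pq)
    refine Finset.sum_le_sum fun j _ => Finset.le_inf' _ _ fun i _ => ?_
    calc Finset.univ.inf' Finset.univ_nonempty (fun i => q i j)
        = ∑ k, p i k * Finset.univ.inf' Finset.univ_nonempty (fun i => q i j) := by
          rw [← Finset.sum_mul, hp.2, one_mul]
      _ ≤ ∑ k, p i k * q k j :=
          Finset.sum_le_sum fun k _ =>
            mul_le_mul_of_nonneg_left (hmin_q k j) (hp.1 i k)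
      _ = (p * q) i j := rfl
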